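/- Let h, f, g : ℝ → ℝ be functions and let s, t be real numbers with 0 ≤ s ≤ t, h(s) ≠ 0 and h(t) ≠ 0. Let E₁^{[s,t]} be the evolution algebra whose structure matrix is (h(t)/2) times the matrix with constant rows (c₁,c₁,c₁), (c₂,c₂,c₂), (c₃,c₃,c₃), where c₁ = 1/h(s) + f(s), c₂ = 1/h(s) − g(s), c₃ = g(s) − f(s). If (1/h(s)+f(s))·(1/h(s)−g(s))·(g(s)−f(s)) ≠ 0, (g(s)−f(s))·(2/h(s)+f(s)−g(s)) > 0, and (2/h(s))·(1/h(s)+f(s))·(1/h(s)−g(s))·(2/h(s)+f(s)−g(s)) > 0, then E₁^{[s,t]} is isomorphic to the evolution algebra E₇ whose structure matrix has rows (1,0,0), (1,0,0), (1,0,0). -/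

import Mathlib

/-- The linear map `x ↦ (j ↦ sv j * x j - (2/N) * (∑ i, v i * sv i * x i) * v j)`,
a Householder reflection composed with a diagonal scaling. -/
noncomputable def phiMap (sv v : Fin 3 → ℝ) (N : ℝ) : (Fin 3 → ℝ) →ₗ[ℝ] (Fin 3 → ℝ) where
  toFun x := fun j => sv j * x j - (2 / N) * (∑ i, v i * sv i * x i) * v j
  map_add' x y := by
    funext j
    simp only [Pi.add_apply]
    rw [Fin.sum_univ_three, Fin.sum_univ_three, Fin.sum_univ_three]
    ring
  map_smul' c x := by
    funext j
    simp only [Pi.smul_apply, smul_eq_mul, RingHom.id_apply]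
    rw [Fin.sum_univ_three, Fin.sum_univ_three]
    ring

/-- Inverse of `phiMap`. -/
noncomputable def psiMap (sv v : Fin 3 → ℝ) (N : ℝ) : (Fin 3 → ℝ) →ₗ[ℝ] (Fin 3 → ℝ) where
  toFun y := fun j => (y j - (2 / N) * (∑ i, v i * y i) * v j) / sv j
  map_add' x y := by
    funext j
    simp only [Pi.add_apply]
    rw [Fin.sum_univ_three, Fin.sum_univ_three, Fin.sum_univ_three]
    ring
  map_smul' c x := by
    funext j
    simp only [Pi.smul_apply, smul_eq_mul, RingHom.id_apply]
    rw [Fin.sum_univ_three, Fin.sum_univ_three]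
    ring

lemma phi_psi (sv v : Fin 3 → ℝ) (N : ℝ) (hN : v 0 ^ 2 + v 1 ^ 2 + v 2 ^ 2 = N)
    (h0 : sv 0 ≠ 0) (h1 : sv 1 ≠ 0) (h2 : sv 2 ≠ 0) (hN0 : N ≠ 0) (y : Fin 3 → ℝ) :
    phiMap sv v N (psiMap sv v N y) = y := by
  subst hN
  funext j
  fin_cases j <;>
  · simp only [phiMap, psiMap, LinearMap.coe_mk, AddHom.coe_mk, Fin.sum_univ_three,
      Fin.zero_eta, Fin.mk_one, Fin.reduceFinMk]
    field_simp
    ring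

lemma psi_phi (sv v : Fin 3 → ℝ) (N : ℝ) (hN : v 0 ^ 2 + v 1 ^ 2 + v 2 ^ 2 = N)
    (h0 : sv 0 ≠ 0) (h1 : sv 1 ≠ 0) (h2 : sv 2 ≠ 0) (hN0 : N ≠ 0) (y : Fin 3 → ℝ) :
    psiMap sv v N (phiMap sv v N y) = y := by
  subst hN
  funext j
  fin_cases j <;>
  · simp only [phiMap, psiMap, LinearMap.coe_mk, AddHom.coe_mk, Fin.sum_univ_three,
      Fin.zero_eta, Fin.mk_one, Fin.reduceFinMk]
    field_simp
    ring

/-- dot product preservation by the Householder-type map (scalar form). -/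
lemma householder_dot (s0 s1 s2 L : ℝ) (u0 u1 u2 w0 w1 w2 : ℝ)
    (hE : ((s0 - L) ^ 2 + s1 ^ 2 + s2 ^ 2 : ℝ) ≠ 0) :
    (s0 * u0 - 2 / ((s0 - L) ^ 2 + s1 ^ 2 + s2 ^ 2)
          * ((s0 - L) * s0 * u0 + s1 * s1 * u1 + s2 * s2 * u2) * (s0 - L))
        * (s0 * w0 - 2 / ((s0 - L) ^ 2 + s1 ^ 2 + s2 ^ 2)
          * ((s0 - L) * s0 * w0 + s1 * s1 * w1 + s2 * s2 * w2) * (s0 - L))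
      + (s1 * u1 - 2 / ((s0 - L) ^ 2 + s1 ^ 2 + s2 ^ 2)
          * ((s0 - L) * s0 * u0 + s1 * s1 * u1 + s2 * s2 * u2) * s1)
        * (s1 * w1 - 2 / ((s0 - L) ^ 2 + s1 ^ 2 + s2 ^ 2)
          * ((s0 - L) * s0 * w0 + s1 * s1 * w1 + s2 * s2 * w2) * s1)
      + (s2 * u2 - 2 / ((s0 - L) ^ 2 + s1 ^ 2 + s2 ^ 2)
          * ((s0 - L) * s0 * u0 + s1 * s1 * u1 + s2 * s2 * u2) * s2)
        * (s2 * w2 - 2 / ((s0 - L) ^ 2 + s1 ^ 2 + s2 ^ 2)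
          * ((s0 - L) * s0 * w0 + s1 * s1 * w1 + s2 * s2 * w2) * s2)
      = s0 ^ 2 * (u0 * w0) + s1 ^ 2 * (u1 * w1) + s2 ^ 2 * (u2 * w2) := by
  field_simp
  ring

/-- Evolution algebra multiplication on ℝ³ determined by a structure matrix `A`:
`(x ∗_A y) j = ∑ i, x i * y i * A i j`. -/
def evolMul (A : Matrix (Fin 3) (Fin 3) ℝ) (x y : Fin 3 → ℝ) : Fin 3 → ℝ :=
  fun j => ∑ i, x i * y i * A i j

/-- The evolution algebras with structure matrices `A` and `B` are isomorphic:
there is an ℝ-linear equivalence of ℝ³ intertwining the two multiplications. -/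
def EvolIso (A B : Matrix (Fin 3) (Fin 3) ℝ) : Prop :=
  ∃ f : (Fin 3 → ℝ) ≃ₗ[ℝ] (Fin 3 → ℝ),
    ∀ x y, f (evolMul A x y) = evolMul B (f x) (f y)

set_option maxHeartbeats 1000000 in
theorem stmt (h f g : ℝ → ℝ) (s t : ℝ) (hst0 : 0 ≤ s) (hst : s ≤ t)
    (hhs : h s ≠ 0) (hht : h t ≠ 0)
    (c₁ c₂ c₃ : ℝ) (hc₁ : c₁ = 1 / h s + f s) (hc₂ : c₂ = 1 / h s - g s)
    (hc₃ : c₃ = g s - f s)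
    (h1 : (1 / h s + f s) * (1 / h s - g s) * (g s - f s) ≠ 0)
    (h2 : (g s - f s) * (2 / h s + f s - g s) > 0)
    (h3 : (2 / h s) * (1 / h s + f s) * (1 / h s - g s) * (2 / h s + f s - g s) > 0) :
    EvolIso ((h t / 2) • (!![c₁, c₁, c₁; c₂, c₂, c₂; c₃, c₃, c₃] : Matrix (Fin 3) (Fin 3) ℝ)) (!![1, 0, 0; 1, 0, 0; 1, 0, 0] : Matrix (Fin 3) (Fin 3) ℝ) := by
  set k := h t / 2 with hkdef
  have hk : k ≠ 0 := div_ne_zero hht two_ne_zero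
  -- positivity facts
  have h2' : 0 < c₃ * (c₁ + c₂) := by
    have e : c₃ * (c₁ + c₂) = (g s - f s) * (2 / h s + f s - g s) := by
      rw [hc₁, hc₂, hc₃]; ring
    linarith [h2, e.ge, e.le]
  have h3' : 0 < (c₁ + c₂ + c₃) * c₁ * c₂ * (c₁ + c₂) := by
    have e : (c₁ + c₂ + c₃) * c₁ * c₂ * (c₁ + c₂)
        = (2 / h s) * (1 / h s + f s) * (1 / h s - g s) * (2 / h s + f s - g s) := by
      rw [hc₁, hc₂, hc₃]; ring
    linarith [h3, e.ge, e.le]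
  have pac3 : 0 < (c₁ + c₂ + c₃) * c₃ := by nlinarith [sq_nonneg c₃]
  have pac12 : 0 < (c₁ + c₂ + c₃) * (c₁ + c₂) := by nlinarith [sq_nonneg (c₁ + c₂)]
  have pc12 : 0 < c₁ * c₂ := by
    nlinarith [mul_pos h3' pac12, sq_nonneg ((c₁ + c₂ + c₃) * (c₁ + c₂))]
  have pac1 : 0 < (c₁ + c₂ + c₃) * c₁ := by nlinarith [pc12, pac12]
  have pac2 : 0 < (c₁ + c₂ + c₃) * c₂ := by nlinarith [pc12, pac12]
  have hk2 : 0 < k ^ 2 := by positivity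
  have w1pos : 0 < k ^ 2 * ((c₁ + c₂ + c₃) * c₁) := mul_pos hk2 pac1
  have w2pos : 0 < k ^ 2 * ((c₁ + c₂ + c₃) * c₂) := mul_pos hk2 pac2
  have w3pos : 0 < k ^ 2 * ((c₁ + c₂ + c₃) * c₃) := mul_pos hk2 pac3
  set s0 := Real.sqrt (k ^ 2 * ((c₁ + c₂ + c₃) * c₁)) with hs0def
  set s1 := Real.sqrt (k ^ 2 * ((c₁ + c₂ + c₃) * c₂)) with hs1def
  set s2 := Real.sqrt (k ^ 2 * ((c₁ + c₂ + c₃) * c₃)) with hs2def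
  have hs0 : 0 < s0 := Real.sqrt_pos.2 w1pos
  have hs1 : 0 < s1 := Real.sqrt_pos.2 w2pos
  have hs2 : 0 < s2 := Real.sqrt_pos.2 w3pos
  have hs0sq : s0 ^ 2 = k ^ 2 * ((c₁ + c₂ + c₃) * c₁) := Real.sq_sqrt w1pos.le
  have hs1sq : s1 ^ 2 = k ^ 2 * ((c₁ + c₂ + c₃) * c₂) := Real.sq_sqrt w2pos.le
  have hs2sq : s2 ^ 2 = k ^ 2 * ((c₁ + c₂ + c₃) * c₃) := Real.sq_sqrt w3pos.le
  set L : ℝ := k * (c₁ + c₂ + c₃) with hLdef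
  have hL2 : L ^ 2 = s0 ^ 2 + s1 ^ 2 + s2 ^ 2 := by
    rw [hs0sq, hs1sq, hs2sq, hLdef]; ring
  set E : ℝ := (s0 - L) ^ 2 + s1 ^ 2 + s2 ^ 2 with hEdef
  have hE0 : 0 < E := by
    rw [hEdef]; linarith [pow_pos hs1 2, sq_nonneg (s0 - L), sq_nonneg s2]
  set sv : Fin 3 → ℝ := ![s0, s1, s2] with hsvdef
  set v : Fin 3 → ℝ := ![s0 - L, s1, s2] with hvdef
  have hsv0 : sv 0 = s0 := rfl
  have hsv1 : sv 1 = s1 := rfl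
  have hsv2 : sv 2 = s2 := rfl
  have hv0 : v 0 = s0 - L := rfl
  have hv1 : v 1 = s1 := rfl
  have hv2 : v 2 = s2 := rfl
  have hNv : v 0 ^ 2 + v 1 ^ 2 + v 2 ^ 2 = E := by
    simp only [hv0, hv1, hv2, hEdef]
  refine ⟨LinearEquiv.ofLinear (phiMap sv v E) (psiMap sv v E)
      (LinearMap.ext (phi_psi sv v E hNv (hsv0 ▸ hs0.ne') (hsv1 ▸ hs1.ne')
        (hsv2 ▸ hs2.ne') hE0.ne'))
      (LinearMap.ext (psi_phi sv v E hNv (hsv0 ▸ hs0.ne') (hsv1 ▸ hs1.ne')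
        (hsv2 ▸ hs2.ne') hE0.ne')), ?_⟩
  intro x y
  simp only [LinearEquiv.ofLinear_apply]
  have hval : ∀ z : Fin 3 → ℝ, phiMap sv v E z
      = fun j => sv j * z j
        - (2 / E) * (v 0 * sv 0 * z 0 + v 1 * sv 1 * z 1 + v 2 * sv 2 * z 2) * v j := by
    intro z
    funext j
    simp only [phiMap, LinearMap.coe_mk, AddHom.coe_mk, Fin.sum_univ_three]
  set Q : ℝ := k * (c₁ * (x 0 * y 0) + c₂ * (x 1 * y 1) + c₃ * (x 2 * y 2)) with hQdef
  have hA : evolMul (k • !![c₁, c₁, c₁; c₂, c₂, c₂; c₃, c₃, c₃]) x y = fun _ => Q := by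
    funext j
    fin_cases j <;>
    · simp [evolMul, Fin.sum_univ_three, hQdef]
      ring
  rw [hA, hval x, hval y, hval (fun _ => Q)]
  -- key scalar facts
  have hQL : L * Q = s0 ^ 2 * (x 0 * y 0) + s1 ^ 2 * (x 1 * y 1) + s2 ^ 2 * (x 2 * y 2) := by
    rw [hQdef, hLdef, hs0sq, hs1sq, hs2sq]; ring
  have hE0' : ((s0 - L) ^ 2 + s1 ^ 2 + s2 ^ 2 : ℝ) ≠ 0 := by rw [← hEdef]; exact hE0.ne'
  -- the image of the constant vector Q·(1,1,1)
  have hconst0 : s0 * Q - 2 / E * ((s0 - L) * s0 * Q + s1 * s1 * Q + s2 * s2 * Q) * (s0 - L)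
      = L * Q := by
    rw [hEdef]
    field_simp
    linear_combination (Q * (s0 - L)) * hL2
  have hconst1 : s1 * Q - 2 / E * ((s0 - L) * s0 * Q + s1 * s1 * Q + s2 * s2 * Q) * s1 = 0 := by
    rw [hEdef]
    field_simp
    linear_combination (s1 * Q) * hL2
  have hconst2 : s2 * Q - 2 / E * ((s0 - L) * s0 * Q + s1 * s1 * Q + s2 * s2 * Q) * s2 = 0 := by
    rw [hEdef]
    field_simp
    linear_combination (s2 * Q) * hL2
  have hdot := householder_dot s0 s1 s2 L (x 0) (x 1) (x 2) (y 0) (y 1) (y 2) hE0'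
  rw [← hEdef] at hdot
  have hB : ∀ u w : Fin 3 → ℝ, evolMul !![1, 0, 0; 1, 0, 0; 1, 0, 0] u w
      = ![u 0 * w 0 + u 1 * w 1 + u 2 * w 2, 0, 0] := by
    intro u w
    funext j
    fin_cases j <;> simp [evolMul, Fin.sum_univ_three]
  rw [hB]
  funext j
  fin_cases j <;>
    simp only [Fin.zero_eta, Fin.mk_one, Fin.reduceFinMk, Matrix.cons_val_zero,
      Matrix.cons_val_one, Matrix.head_cons, Matrix.cons_val_two, Matrix.tail_cons] <;>
    rw [hsv0, hsv1, hsv2, hv0, hv1, hv2]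
  · -- j = 0
    linear_combination hconst0 + hQL - hdot
  · -- j = 1
    linear_combination hconst1
  · -- j = 2
    linear_combination hconst2
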